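/- arXiv:1312.2114 — 2 statements merged into one kernel-verified Lean document; each statement's English description precedes it below -/
import Mathlib

section
/- Let n ≥ 1, d ≥ 2 be integers and let a ∈ 𝒵_n be written as a = Σ_{v∈ℤ/n, v≠0} a_v e_v with integer coefficients a_v. Then the class of a in Σ(n,d) lies in the embedded image of S(n,d) (equivalently, a ∈ (x−1)·𝒵_n + ℰ_{n,d}) if and only if Σ_{v} v·a_v ≡ 0 (mod n). -/
open Polynomial Matrix

noncomputable section

/-- `Rq n` is the ring `ℤ[x]/(x^n - 1)`. -/
abbrev Rq (n : ℕ) : Type := Polynomial ℤ ⧸ Ideal.span ({X ^ n - 1} : Set (Polynomial ℤ))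

/-- Projection `ℤ[x] → ℤ[x]/(x^n-1)`. -/
def mkR (n : ℕ) : Polynomial ℤ →ₐ[ℤ] Rq n := Ideal.Quotient.mkₐ ℤ _

/-- Evaluation at 1, `ℤ[x]/(x^n-1) → ℤ`. -/
def evalOne (n : ℕ) : Rq n →ₐ[ℤ] ℤ :=
  Ideal.Quotient.liftₐ _ (aeval (1 : ℤ)) (by
    intro a ha
    have h : Ideal.span ({X ^ n - 1} : Set (Polynomial ℤ)) ≤
        RingHom.ker (aeval (1 : ℤ) : Polynomial ℤ →ₐ[ℤ] ℤ) := by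
      rw [Ideal.span_le]
      rintro b ⟨rfl⟩
      simp [RingHom.mem_ker]
    exact h ha)

/-- `𝒵_n`, the ℤ-submodule of elements of `ℤ[x]/(x^n-1)` vanishing at 1. -/
def Znd (n : ℕ) : Submodule ℤ (Rq n) := LinearMap.ker (evalOne n).toLinearMap

/-- `e_v = x^v - 1`. -/
def eR (n : ℕ) (v : ZMod n) : Rq n := mkR n (X ^ v.val - 1)

lemma eR_mem (n : ℕ) (v : ZMod n) : eR n v ∈ Znd n := by
  simp [Znd, eR, evalOne, mkR, LinearMap.mem_ker]
  exact sub_eq_zero.mpr (by simp [Ideal.Quotient.liftₐ, Ideal.Quotient.lift_mk])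

/-- `e_v` as an element of `𝒵_n`. -/
def eZ (n : ℕ) (v : ZMod n) : Znd n := ⟨eR n v, eR_mem n v⟩

/-- `ε_v = d·e_v − e_{d·v}`. -/
def epsR (n d : ℕ) (v : ZMod n) : Rq n := (d : ℤ) • eR n v - eR n ((d : ZMod n) * v)

/-- `ℰ_{n,d}`: the ℤ-submodule generated by the `ε_v`, `v ≠ 0`. -/
def Esub (n d : ℕ) : Submodule ℤ (Rq n) :=
  Submodule.span ℤ {x | ∃ v : ZMod n, v ≠ 0 ∧ x = epsR n d v}

/-- The sand dune group `Σ(n,d) = 𝒵_n / ℰ_{n,d}` of `DB(n,d)`. -/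
abbrev SigmaGrp (n d : ℕ) : Type :=
  Znd n ⧸ (Esub n d).comap (Znd n).subtype

/-- Projection `𝒵_n → Σ(n,d)`. -/
def sigmaMk (n d : ℕ) (a : Znd n) : SigmaGrp n d := Submodule.Quotient.mk a

/-- `f_v = d·x^v − x^{d·v}(1 + x + ⋯ + x^{d−1})`. -/
def fR (n d : ℕ) (v : ZMod n) : Rq n :=
  mkR n ((d : Polynomial ℤ) * X ^ v.val -
    X ^ (((d : ZMod n) * v).val) * (∑ i ∈ Finset.range d, X ^ i))

/-- The `R`-span of the `f_v`, `v ≠ 0`, where `R = ℤ[x]/(x^n-1)`. -/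
def Fsub (n d : ℕ) : Submodule (Rq n) (Rq n) :=
  Submodule.span (Rq n) {x | ∃ v : ZMod n, v ≠ 0 ∧ x = fR n d v}

/-- The sandpile (critical) group `S(n,d)` of the generalized de Bruijn graph `DB(n,d)`:
the quotient of `𝒵_n` by the `R`-span of the `f_v`, `v ≠ 0`. -/
abbrev SGrp (n d : ℕ) : Type :=
  Znd n ⧸ ((Fsub n d).restrictScalars ℤ).comap (Znd n).subtype

/-- The element `x - 1` of `ℤ[x]/(x^n-1)`. -/
def xSubOne (n : ℕ) : Rq n := mkR n (X - 1)

/-- The submodule `(x-1)·𝒵_n + ℰ_{n,d}` of `ℤ[x]/(x^n-1)`. -/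
def SImageSub (n d : ℕ) : Submodule ℤ (Rq n) :=
  (Znd n).map (LinearMap.mulLeft ℤ (xSubOne n)) ⊔ Esub n d

/-- The embedded image `((x-1)·𝒵_n + ℰ_{n,d})/ℰ_{n,d}` of `S(n,d)` in `Σ(n,d)`. -/
def SImage (n d : ℕ) : Submodule ℤ (SigmaGrp n d) :=
  ((SImageSub n d).comap (Znd n).subtype).map ((Esub n d).comap (Znd n).subtype).mkQ

/-- The ring hom `ℤ[x]/(x^n-1) → (ZMod n)[ε]` sending `x` to `1 + ε`. -/
def psiR (n : ℕ) [NeZero n] : Rq n →+* DualNumber (ZMod n) :=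
  Ideal.Quotient.lift _
    (aeval (1 + DualNumber.eps : DualNumber (ZMod n)) :
      Polynomial ℤ →ₐ[ℤ] DualNumber (ZMod n)).toRingHom (by
    have h : Ideal.span ({X ^ n - 1} : Set (Polynomial ℤ)) ≤
        RingHom.ker (aeval (1 + DualNumber.eps : DualNumber (ZMod n)) :
          Polynomial ℤ →ₐ[ℤ] DualNumber (ZMod n)) := by
      rw [Ideal.span_le]
      rintro b ⟨rfl⟩
      have : ((1 + DualNumber.eps : DualNumber (ZMod n)) ^ n) = 1 := by
        apply TrivSqZeroExt.ext
        · simp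
        · simp [ZMod.natCast_self]
      simp [RingHom.mem_ker, this]
    intro a ha
    exact h ha)

/-- The "derivative at 1 mod n" linear functional on `ℤ[x]/(x^n-1)`. -/
def Dmap (n : ℕ) [NeZero n] : Rq n →ₗ[ℤ] ZMod n :=
  ((TrivSqZeroExt.sndHom (ZMod n) (ZMod n)).restrictScalars ℤ) ∘ₗ
    (psiR n).toIntAlgHom.toLinearMap

lemma Dmap_mk (n : ℕ) [NeZero n] (p : Polynomial ℤ) :
    Dmap n (mkR n p) = (aeval (1 + DualNumber.eps : DualNumber (ZMod n)) p).snd := rfl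

lemma Dmap_eR (n : ℕ) [NeZero n] (v : ZMod n) : Dmap n (eR n v) = v := by
  rw [eR, Dmap_mk]
  simp [ZMod.natCast_val, ZMod.cast_id]

lemma fst_aeval_poly (n : ℕ) [NeZero n] (p : Polynomial ℤ) :
    (aeval (1 + DualNumber.eps : DualNumber (ZMod n)) p).fst
      = ((aeval (1 : ℤ) p : ℤ) : ZMod n) := by
  have hhom : ((TrivSqZeroExt.fstHom (ZMod n) (ZMod n) (ZMod n)).toRingHom.comp
        (aeval (1 + DualNumber.eps : DualNumber (ZMod n)) :
          Polynomial ℤ →ₐ[ℤ] DualNumber (ZMod n)).toRingHom)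
      = (Int.castRingHom (ZMod n)).comp
        ((aeval (1 : ℤ) : Polynomial ℤ →ₐ[ℤ] ℤ) : Polynomial ℤ →+* ℤ) := by
    apply Polynomial.ringHom_ext' (RingHom.ext_int _ _)
    simp
  exact RingHom.congr_fun hhom p

lemma fst_psiR (n : ℕ) [NeZero n] (z : Rq n) :
    (psiR n z).fst = ((evalOne n z : ℤ) : ZMod n) := by
  obtain ⟨p, rfl⟩ := Ideal.Quotient.mk_surjective (I := Ideal.span
    ({X ^ n - 1} : Set (Polynomial ℤ))) z
  have h1 : (psiR n (Ideal.Quotient.mk _ p)).fst =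
      (TrivSqZeroExt.fst (aeval (1 + DualNumber.eps : DualNumber (ZMod n)) p)) := rfl
  have h2 : evalOne n (Ideal.Quotient.mk _ p) = aeval (1 : ℤ) p := rfl
  rw [h1, h2, fst_aeval_poly]

lemma Dmap_xSubOne_mul (n : ℕ) [NeZero n] (z : Rq n) (hz : z ∈ Znd n) :
    Dmap n (xSubOne n * z) = 0 := by
  have hps : psiR n (xSubOne n) = DualNumber.eps := by
    show (aeval (1 + DualNumber.eps : DualNumber (ZMod n)) (X - 1)) = _
    simp
  have h1 : Dmap n (xSubOne n * z) = (psiR n (xSubOne n) * psiR n z).snd := by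
    have hmul : psiR n (xSubOne n * z) = psiR n (xSubOne n) * psiR n z :=
      RingHom.map_mul _ _ _
    show (psiR n (xSubOne n * z)).snd = _
    rw [hmul]
  rw [h1, hps, TrivSqZeroExt.snd_mul]
  have hz0 : evalOne n z = 0 := hz
  rw [DualNumber.fst_eps, DualNumber.snd_eps, fst_psiR, hz0]
  simp

lemma Dmap_eps (n d : ℕ) [NeZero n] (v : ZMod n) : Dmap n (epsR n d v) = 0 := by
  rw [epsR, LinearMap.map_sub, LinearMap.map_smul, Dmap_eR, Dmap_eR, zsmul_eq_mul,
    Int.cast_natCast]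
  ring

lemma key_mem (n : ℕ) (k : ℕ) :
    mkR n (X ^ k - 1) - (k : ℤ) • xSubOne n ∈
      (Znd n).map (LinearMap.mulLeft ℤ (xSubOne n)) := by
  refine ⟨mkR n ((∑ i ∈ Finset.range k, X ^ i) - C (k : ℤ)), ?_, ?_⟩
  · simp [Znd, evalOne, mkR, LinearMap.mem_ker]
    simp [Ideal.Quotient.liftₐ, Ideal.Quotient.lift_mk]
  · rw [LinearMap.mulLeft_apply, xSubOne, ← _root_.map_mul]
    have hsm : (k : ℤ) • mkR n (X - 1) = mkR n (C (k : ℤ) * (X - 1)) := by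
      rw [_root_.map_mul, ← Polynomial.algebraMap_eq, AlgHom.commutes, ← Algebra.smul_def]
    rw [hsm, ← map_sub]
    congr 1
    have hgs := mul_geom_sum (X : Polynomial ℤ) k
    linear_combination hgs

lemma nsmul_xSubOne_mem (n : ℕ) :
    (n : ℤ) • xSubOne n ∈ (Znd n).map (LinearMap.mulLeft ℤ (xSubOne n)) := by
  have h := key_mem n n
  have h0 : mkR n (X ^ n - 1) = 0 := by
    simp only [mkR, Ideal.Quotient.mkₐ_eq_mk]
    rw [Ideal.Quotient.eq_zero_iff_mem]
    exact Ideal.subset_span rfl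
  rw [h0, zero_sub] at h
  simpa using neg_mem h

/-- Theorem: `a = Σ a_v e_v ∈ 𝒵_n` lies in the embedded copy `(x−1)𝒵_n + ℰ_{n,d}`
of `S(n,d)` iff `Σ v·a_v ≡ 0 (mod n)`. -/
theorem mem_embedded_sandpile_iff (n d : ℕ) (hn : 1 ≤ n) (hd : 2 ≤ d) [NeZero n]
    (a : Znd n) (A : ZMod n → ℤ) (hA0 : A 0 = 0)
    (ha : (a : Rq n) = ∑ v : ZMod n, A v • eR n v) :
    (a : Rq n) ∈ SImageSub n d ↔ (n : ℤ) ∣ ∑ v : ZMod n, (v.val : ℤ) * A v := by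
  constructor
  · intro h
    rw [SImageSub] at h
    obtain ⟨b, hb, c, hc, hbc⟩ := Submodule.mem_sup.mp h
    obtain ⟨z, hz, rfl⟩ := hb
    have hDb : Dmap n (LinearMap.mulLeft ℤ (xSubOne n) z) = 0 := by
      simpa using Dmap_xSubOne_mul n z hz
    have hDc : Dmap n c = 0 := by
      have hle : Esub n d ≤ LinearMap.ker (Dmap n) := by
        rw [Esub, Submodule.span_le]
        rintro _ ⟨v, hv, rfl⟩
        exact Dmap_eps n d v
      exact hle hc
    have hD : Dmap n (a : Rq n) = 0 := by
      rw [← hbc, map_add, hDb, hDc, add_zero]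
    rw [ha, map_sum] at hD
    simp only [LinearMap.map_smul, Dmap_eR] at hD
    have hcast : ((∑ v : ZMod n, (v.val : ℤ) * A v : ℤ) : ZMod n) =
        ∑ v : ZMod n, A v • v := by
      push_cast
      refine Finset.sum_congr rfl fun v _ => ?_
      simp [ZMod.natCast_val, ZMod.cast_id, zsmul_eq_mul, mul_comm]
    rw [← ZMod.intCast_zmod_eq_zero_iff_dvd, hcast, hD]
  · intro h
    obtain ⟨m, hm⟩ := h
    set M := (Znd n).map (LinearMap.mulLeft ℤ (xSubOne n)) with hMdef
    have h1 : ∀ v : ZMod n, A v • eR n v - (A v * (v.val : ℤ)) • xSubOne n ∈ M := by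
      intro v
      have hk := Submodule.smul_mem M (A v) (key_mem n v.val)
      simpa [eR, smul_sub, smul_smul, mul_assoc] using hk
    have h2 : (∑ v : ZMod n, (A v • eR n v - (A v * (v.val : ℤ)) • xSubOne n)) ∈ M :=
      Submodule.sum_mem _ fun v _ => h1 v
    rw [Finset.sum_sub_distrib, ← Finset.sum_smul, ← ha] at h2
    have h3 : (∑ v : ZMod n, A v * (v.val : ℤ)) • xSubOne n ∈ M := by
      have hs : (∑ v : ZMod n, A v * (v.val : ℤ)) = m * (n : ℤ) := by
        rw [show (∑ v : ZMod n, A v * (v.val : ℤ)) = ∑ v : ZMod n, (v.val : ℤ) * A v from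
          Finset.sum_congr rfl fun v _ => mul_comm _ _, hm]
        ring
      rw [hs, mul_smul]
      exact Submodule.smul_mem _ _ (nsmul_xSubOne_mem n)
    have hmem : (a : Rq n) ∈ M := by
      have := Submodule.add_mem M h2 h3
      simpa using this
    rw [SImageSub]
    exact Submodule.mem_sup_left hmem

end
end

section
/- Let n ≥ 1 and let p be a prime. Every matrix in C(n,p) has the all-ones vector 𝟙 as an eigenvector, and the map C'(n,p) × 𝔽_p^* → C(n,p) given by (g, λ) ↦ λ·g is a group isomorphism; that is, C(n,p) is the internal direct product of C'(n,p) and the group of nonzero scalar matrices {λI : λ ∈ 𝔽_p^*}. -/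
open Polynomial Matrix

noncomputable section

variable (n p : ℕ)

/-- A matrix is circulant iff it equals `circulant a` for some vector `a`;
equivalently, iff it has the form `a_1 Q + ⋯ + a_n Q^n`. -/
def IsCircu [NeZero n] [NeZero p] (M : Matrix (ZMod n) (ZMod n) (ZMod p)) : Prop :=
  ∃ a : ZMod n → ZMod p, M = Matrix.circulant a

lemma isCircu_one [NeZero n] [NeZero p] : IsCircu n p 1 :=
  ⟨Pi.single 0 1, (Matrix.circulant_single_one _ _).symm⟩

lemma isCircu_mul [NeZero n] [NeZero p] {M N : Matrix (ZMod n) (ZMod n) (ZMod p)}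
    (hM : IsCircu n p M) (hN : IsCircu n p N) : IsCircu n p (M * N) := by
  obtain ⟨a, rfl⟩ := hM; obtain ⟨b, rfl⟩ := hN
  exact ⟨_, Matrix.circulant_mul a b⟩

lemma isCircu_pow [NeZero n] [NeZero p] {M : Matrix (ZMod n) (ZMod n) (ZMod p)}
    (hM : IsCircu n p M) (k : ℕ) : IsCircu n p (M ^ k) := by
  induction k with
  | zero => simpa using isCircu_one n p
  | succ k ih => rw [pow_succ]; exact isCircu_mul n p ih hM

/-- `C(n,p)`: the group of invertible circulant `n × n` matrices over `𝔽_p`. -/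
def Cgrp [NeZero n] [NeZero p] : Subgroup (Matrix (ZMod n) (ZMod n) (ZMod p))ˣ where
  carrier := {u | IsCircu n p u.val}
  one_mem' := isCircu_one n p
  mul_mem' {u v} hu hv := isCircu_mul n p hu hv
  inv_mem' := by
    intro u hu
    haveI : Finite (Matrix (ZMod n) (ZMod n) (ZMod p)) :=
      inferInstanceAs (Finite (ZMod n → ZMod n → ZMod p))
    haveI : Finite (Matrix (ZMod n) (ZMod n) (ZMod p))ˣ :=
      Finite.of_injective (Units.val) (fun _ _ h => Units.ext h)
    have h1 : u⁻¹ = u ^ (orderOf u - 1) := by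
      refine inv_eq_of_mul_eq_one_right ?_
      rw [← pow_succ', Nat.sub_add_cancel (orderOf_pos u), pow_orderOf_eq_one]
    rw [Set.mem_setOf_eq, h1, Units.val_pow_eq_pow_val]
    exact isCircu_pow n p hu _

instance [NeZero n] [NeZero p] : CommGroup (Cgrp n p) :=
  { (inferInstance : Group (Cgrp n p)) with
    mul_comm := by
      rintro ⟨u, a, ha⟩ ⟨v, b, hb⟩
      refine Subtype.ext (Units.ext ?_)
      show u.val * v.val = v.val * u.val
      rw [ha, hb, Matrix.circulant_mul_comm] }

/-- `C'(n,p)`: the subgroup of `C(n,p)` of matrices fixing the all-ones vector. -/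
def Cgrp' [NeZero n] [NeZero p] : Subgroup (Cgrp n p) where
  carrier := {g | (g : (Matrix (ZMod n) (ZMod n) (ZMod p))ˣ).val *ᵥ (fun _ => 1) = fun _ => 1}
  one_mem' := by
    show (((1 : Cgrp n p) : (Matrix (ZMod n) (ZMod n) (ZMod p))ˣ)).val *ᵥ _ = _
    simp [Matrix.one_mulVec]
  mul_mem' := by
    intro a b ha hb
    show ((a : (Matrix (ZMod n) (ZMod n) (ZMod p))ˣ).val * _) *ᵥ _ = _
    rw [← Matrix.mulVec_mulVec]
    rw [Set.mem_setOf_eq] at ha hb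
    rw [hb, ha]
  inv_mem' := by
    intro a ha
    rw [Set.mem_setOf_eq] at ha ⊢
    have hco : ((a⁻¹ : Cgrp n p) : (Matrix (ZMod n) (ZMod n) (ZMod p))ˣ)
        = ((a : (Matrix (ZMod n) (ZMod n) (ZMod p))ˣ))⁻¹ := rfl
    have key : ((a⁻¹ : Cgrp n p) : (Matrix (ZMod n) (ZMod n) (ZMod p))ˣ).val *
        ((a : (Matrix (ZMod n) (ZMod n) (ZMod p))ˣ)).val = 1 := by
      rw [hco]; exact Units.inv_mul _
    conv_lhs => rw [← ha]
    rw [Matrix.mulVec_mulVec, key, Matrix.one_mulVec]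

lemma single_shift [NeZero n] [NeZero p] (a b i : ZMod n) :
    (Pi.single a (1 : ZMod p) : ZMod n → ZMod p) (i - b)
      = (Pi.single (a + b) (1 : ZMod p) : ZMod n → ZMod p) i := by
  simp [Pi.single_apply, sub_eq_iff_eq_add]

/-- The cyclic-shift permutation matrix `Q_n` (of the cycle `(1,2,…,n)`), as a unit. -/
def QUnit [NeZero n] [NeZero p] : (Matrix (ZMod n) (ZMod n) (ZMod p))ˣ where
  val := Matrix.circulant (Pi.single 1 1)
  inv := Matrix.circulant (Pi.single (-1) 1)
  val_inv := by
    rw [Matrix.circulant_mul, Matrix.mulVec_single]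
    have h : (fun i => Matrix.circulant (Pi.single 1 (1 : ZMod p)) i (-1 : ZMod n) * 1)
        = Pi.single (0 : ZMod n) (1 : ZMod p) := by
      funext i
      rw [mul_one, Matrix.circulant_apply, single_shift, add_neg_cancel]
    rw [show MulOpposite.op (1 : ZMod p) • (Matrix.circulant (Pi.single 1 (1 : ZMod p))).col (-1 : ZMod n)
        = fun i => Matrix.circulant (Pi.single 1 (1 : ZMod p)) i (-1 : ZMod n) * 1 from by
      funext i; simp [Matrix.col]]
    rw [h, Matrix.circulant_single_one]
  inv_val := by
    rw [Matrix.circulant_mul, Matrix.mulVec_single]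
    have h : (fun i => Matrix.circulant (Pi.single (-1 : ZMod n) (1 : ZMod p)) i (1 : ZMod n) * 1)
        = Pi.single (0 : ZMod n) (1 : ZMod p) := by
      funext i
      rw [mul_one, Matrix.circulant_apply, single_shift, neg_add_cancel]
    rw [show MulOpposite.op (1 : ZMod p) • (Matrix.circulant (Pi.single (-1 : ZMod n) (1 : ZMod p))).col (1 : ZMod n)
        = fun i => Matrix.circulant (Pi.single (-1 : ZMod n) (1 : ZMod p)) i (1 : ZMod n) * 1 from by
      funext i; simp [Matrix.col]]
    rw [h, Matrix.circulant_single_one]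

/-- `Q_n` as an element of `C(n,p)`. -/
def Qelem [NeZero n] [NeZero p] : Cgrp n p := ⟨QUnit n p, ⟨Pi.single 1 1, rfl⟩⟩

lemma Qelem_mem' [NeZero n] [NeZero p] : Qelem n p ∈ Cgrp' n p := by
  show (Matrix.circulant (Pi.single (1 : ZMod n) (1 : ZMod p))) *ᵥ (fun _ => 1) = fun _ => 1
  funext i
  simp only [Matrix.mulVec, dotProduct, Matrix.circulant_apply]
  rw [Fintype.sum_equiv (Equiv.subLeft i)
    (fun x => (Pi.single (1 : ZMod n) (1 : ZMod p) : ZMod n → ZMod p) (i - x) * 1)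
    (fun j => (Pi.single (1 : ZMod n) (1 : ZMod p) : ZMod n → ZMod p) j * 1)
    (fun x => rfl)]
  simp [Finset.sum_pi_single']

/-- `Q_n` as an element of `C'(n,p)`. -/
def Qelem' [NeZero n] [NeZero p] : Cgrp' n p := ⟨Qelem n p, Qelem_mem' n p⟩


/-- The scalar matrix `λ·I` as a unit, for `λ ∈ 𝔽_p^*`. -/
def scalarUnit (n p : ℕ) [NeZero n] [NeZero p] (μ : (ZMod p)ˣ) :
    (Matrix (ZMod n) (ZMod n) (ZMod p))ˣ :=
  Units.map (Matrix.scalar (ZMod n) : ZMod p →+* Matrix (ZMod n) (ZMod n) (ZMod p)).toMonoidHom μ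

lemma scalarUnit_mem (n p : ℕ) [NeZero n] [NeZero p] (μ : (ZMod p)ˣ) :
    scalarUnit n p μ ∈ Cgrp n p :=
  ⟨Pi.single 0 μ.val, by rw [Matrix.circulant_single]; rfl⟩

/-- The scalar matrix `λ·I` as an element of `C(n,p)`. -/
def scalarElem (n p : ℕ) [NeZero n] [NeZero p] (μ : (ZMod p)ˣ) : Cgrp n p :=
  ⟨scalarUnit n p μ, scalarUnit_mem n p μ⟩


lemma circulant_mulVec_one' [NeZero n] [NeZero p] (a : ZMod n → ZMod p) :
    Matrix.circulant a *ᵥ (fun _ => (1 : ZMod p)) = fun _ => ∑ j, a j := by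
  funext i
  simp only [Matrix.mulVec, dotProduct, Matrix.circulant_apply, mul_one]
  exact Fintype.sum_equiv (Equiv.subLeft i) (fun x => a (i - x)) a (fun x => rfl)

lemma scalar_mulVec' [NeZero n] [NeZero p] (c : ZMod p) (v : ZMod n → ZMod p) :
    (Matrix.scalar (ZMod n) c) *ᵥ v = c • v := by
  funext i
  simp [Matrix.scalar, Matrix.mulVec, Matrix.diagonal, dotProduct, Finset.sum_ite_eq,
    Finset.mem_univ]

lemma eigen_exists' [NeZero n] [NeZero p] (g : Cgrp n p) :
    ∃ μ : ZMod p, (g.val.val) *ᵥ (fun _ => (1 : ZMod p)) = fun _ => μ := by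
  obtain ⟨a, ha⟩ := g.2
  exact ⟨∑ j, a j, by rw [ha, circulant_mulVec_one']⟩

lemma eigen_ne_zero' [NeZero n] [NeZero p] (hp : p.Prime) (g : Cgrp n p) {μ : ZMod p}
    (h : (g.val.val) *ᵥ (fun _ => (1 : ZMod p)) = fun _ => μ) : μ ≠ 0 := by
  haveI : Fact p.Prime := ⟨hp⟩
  intro h0
  subst h0
  have h2 := congrArg (fun v => ((g.val)⁻¹).val *ᵥ v) h
  simp only [Matrix.mulVec_mulVec, Units.inv_mul, Matrix.one_mulVec] at h2
  have h3 : (fun _ : ZMod n => (0 : ZMod p)) = (0 : ZMod n → ZMod p) := rfl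
  rw [h3, Matrix.mulVec_zero] at h2
  exact one_ne_zero (congrFun h2 0)

/-- `scalarElem` as a monoid hom. -/
def scalarHom (n p : ℕ) [NeZero n] [NeZero p] : (ZMod p)ˣ →* Cgrp n p where
  toFun := scalarElem n p
  map_one' := Subtype.ext (map_one (Units.map (Matrix.scalar (ZMod n) :
    ZMod p →+* Matrix (ZMod n) (ZMod n) (ZMod p)).toMonoidHom))
  map_mul' μ ν := Subtype.ext (map_mul (Units.map (Matrix.scalar (ZMod n) :
    ZMod p →+* Matrix (ZMod n) (ZMod n) (ZMod p)).toMonoidHom) μ ν)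

lemma f_mulVec' [NeZero n] [NeZero p] (μ : (ZMod p)ˣ) (h : Cgrp' n p) :
    ((scalarElem n p μ * ((h : Cgrp n p))).val.val) *ᵥ (fun _ => (1 : ZMod p))
      = fun _ => (μ : ZMod p) := by
  have hh : ((h : Cgrp n p).val.val) *ᵥ (fun _ => (1 : ZMod p)) = fun _ => 1 := h.2
  show ((Matrix.scalar (ZMod n)) (μ : ZMod p) * _) *ᵥ _ = _
  rw [← Matrix.mulVec_mulVec, hh, scalar_mulVec']
  funext i
  simp

/-- Theorem: every invertible circulant matrix has the all-ones vector as an eigenvector,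
and `(g, λ) ↦ λ·g` is a group isomorphism `C'(n,p) × 𝔽_p^* ≃ C(n,p)`. -/
theorem circulant_internal_direct_product (n p : ℕ) (hn : 1 ≤ n) [NeZero n]
    (hp : p.Prime) [NeZero p] :
    (∀ g : Cgrp n p, ∃ μ : ZMod p,
      ((g : (Matrix (ZMod n) (ZMod n) (ZMod p))ˣ) : Matrix (ZMod n) (ZMod n) (ZMod p)) *ᵥ
        (fun _ => 1) = fun _ => μ) ∧
    (∀ a b : (Cgrp' n p) × (ZMod p)ˣ,
      scalarElem n p (a * b).2 * (((a * b).1 : Cgrp n p)) =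
        (scalarElem n p a.2 * (a.1 : Cgrp n p)) *
          (scalarElem n p b.2 * (b.1 : Cgrp n p))) ∧
    Function.Bijective
      (fun x : (Cgrp' n p) × (ZMod p)ˣ => scalarElem n p x.2 * (x.1 : Cgrp n p)) := by
  haveI : Fact p.Prime := ⟨hp⟩
  refine ⟨fun g => eigen_exists' n p g, ?_, ?_, ?_⟩
  · intro a b
    have hs : scalarElem n p (a.2 * b.2) = scalarElem n p a.2 * scalarElem n p b.2 :=
      (scalarHom n p).map_mul a.2 b.2
    simp only [Prod.fst_mul, Prod.snd_mul, Subgroup.coe_mul, hs]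
    rw [mul_mul_mul_comm]
  · rintro ⟨h, μ⟩ ⟨k, ν⟩ heq
    simp only at heq
    have h1 := congrArg (fun g : Cgrp n p => g.val.val *ᵥ (fun _ => (1 : ZMod p))) heq
    simp only [f_mulVec'] at h1
    have hμν : μ = ν := Units.ext (congrFun h1 0)
    subst hμν
    have h2 : (h : Cgrp n p) = (k : Cgrp n p) := mul_left_cancel heq
    exact Prod.ext (Subtype.ext h2) rfl
  · intro g
    obtain ⟨μ, hμ⟩ := eigen_exists' n p g
    have hne := eigen_ne_zero' n p hp g hμ
    set u : (ZMod p)ˣ := Units.mk0 μ hne with hu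
    have hmem : (scalarElem n p u)⁻¹ * g ∈ Cgrp' n p := by
      show (((scalarElem n p u)⁻¹ * g).val.val) *ᵥ (fun _ => (1 : ZMod p)) = fun _ => 1
      have hinv : (scalarElem n p u)⁻¹ = scalarElem n p u⁻¹ := ((scalarHom n p).map_inv u).symm
      rw [hinv]
      show ((Matrix.scalar (ZMod n)) ((u⁻¹ : (ZMod p)ˣ) : ZMod p) * _) *ᵥ _ = _
      rw [← Matrix.mulVec_mulVec, hμ, scalar_mulVec']
      funext i
      show ((u⁻¹ : (ZMod p)ˣ) : ZMod p) * μ = 1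
      have : ((u⁻¹ : (ZMod p)ˣ) : ZMod p) * (u : ZMod p) = 1 := by
        rw [← Units.val_mul, inv_mul_cancel, Units.val_one]
      simpa [hu] using this
    refine ⟨⟨⟨(scalarElem n p u)⁻¹ * g, hmem⟩, u⟩, ?_⟩
    simp [mul_inv_cancel_left]


end
end
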